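/- Fix ℏ ∈ ℂ with ℏ ≠ 0 and N ∈ ℂ. On the space of Laurent polynomials ℂ[λ, λ⁻¹], define the operators a = (λ/2)·d/dλ + λ/ℏ − 1/4, b = multiplication by λ², and c_N = (1/4)·d²/dλ² + (1/ℏ)·d/dλ + 1/ℏ² + (1−4N²)/(16λ²). Then the following operator identities hold: [a, b] = b, [c_N, a] = c_N, [c_N, b] = 2a + 1, and b∘c_N = a² − N²/4. -/

import Mathlib

noncomputable section

namespace BGW9

open LaurentPolynomial

/-- The derivative `d/dλ` on Laurent polynomials: `T^n ↦ n·T^{n−1}`. -/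
def lD (f : LaurentPolynomial ℂ) : LaurentPolynomial ℂ :=
  f.coeff.sum fun n c => (c * (n : ℂ)) • (T (n-1) : LaurentPolynomial ℂ)

/-- The Kac–Schwarz operator `a = (λ/2)·d/dλ + λ/ℏ − 1/4`. -/
def aOp (ℏ : ℂ) (f : LaurentPolynomial ℂ) : LaurentPolynomial ℂ :=
  (1/2 : ℂ) • (T 1 * lD f) + ℏ⁻¹ • (T 1 * f) - (1/4 : ℂ) • f

/-- The Kac–Schwarz operator `b = λ²` (multiplication). -/
def bOp (f : LaurentPolynomial ℂ) : LaurentPolynomial ℂ := T 2 * f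

/-- The Kac–Schwarz operator `c_N = (1/4)·d²/dλ² + (1/ℏ)·d/dλ + 1/ℏ² + (1−4N²)/(16λ²)`. -/
def cOp (ℏ N : ℂ) (f : LaurentPolynomial ℂ) : LaurentPolynomial ℂ :=
  (1/4 : ℂ) • lD (lD f) + ℏ⁻¹ • lD f + (ℏ^2)⁻¹ • f
    + ((1 - 4*N^2)/16) • (T (-2) * f)

lemma lD_zero : lD (0 : LaurentPolynomial ℂ) = 0 := by simp [lD]

lemma lD_add (f g : LaurentPolynomial ℂ) : lD (f + g) = lD f + lD g := by
  unfold lD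
  rw [AddMonoidAlgebra.coeff_add]
  exact Finsupp.sum_add_index' (by simp) (by intros; rw [add_mul, add_smul])

lemma lD_smul (c : ℂ) (f : LaurentPolynomial ℂ) : lD (c • f) = c • lD f := by
  unfold lD
  rw [AddMonoidAlgebra.coeff_smul, Finsupp.sum_smul_index (by simp), Finsupp.smul_sum]
  simp [mul_assoc, smul_smul]

lemma lD_single (n : ℤ) (a : ℂ) :
    lD (AddMonoidAlgebra.single n a : LaurentPolynomial ℂ) = (a * n) • T (n-1) := by
  unfold lD
  rw [AddMonoidAlgebra.coeff_single]
  exact Finsupp.sum_single_index (by simp)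

lemma smul_T (a : ℂ) (n : ℤ) : a • (T n : LaurentPolynomial ℂ) = C a * T n := by
  rw [← single_eq_C_mul_T]
  show a • (AddMonoidAlgebra.single n 1 : LaurentPolynomial ℂ) = _
  rw [AddMonoidAlgebra.smul_single, smul_eq_mul, mul_one]

lemma lD_C_mul_T (a : ℂ) (n : ℤ) :
    lD (C a * T n : LaurentPolynomial ℂ) = (a * n) • T (n-1) := by
  rw [← single_eq_C_mul_T, lD_single]

lemma lD_T (n : ℤ) : lD (T n : LaurentPolynomial ℂ) = (n : ℂ) • T (n-1) := by
  have := lD_C_mul_T 1 n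
  simpa using this

lemma lD_T_mul (k : ℤ) (f : LaurentPolynomial ℂ) :
    lD (T k * f) = (k : ℂ) • (T (k-1) * f) + T k * lD f := by
  induction f using LaurentPolynomial.induction_on' with
  | add p q hp hq =>
      rw [mul_add, lD_add, hp, hq, lD_add, mul_add, mul_add, smul_add]; abel
  | C_mul_T n a =>
      rw [mul_left_comm, ← T_add, lD_C_mul_T, lD_C_mul_T,
        mul_left_comm (T (k-1)) (C a), ← T_add, mul_smul_comm, ← T_add,
        ← smul_T, smul_smul,
        show k - 1 + n = k + n - 1 by ring, show k + (n - 1) = k + n - 1 by ring,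
        ← add_smul]
      congr 1
      push_cast
      ring

lemma lD_neg (f : LaurentPolynomial ℂ) : lD (-f) = -lD f := by
  have h : (-f) = (-1 : ℂ) • f := by simp
  rw [h, lD_smul]; simp

lemma lD_sub (f g : LaurentPolynomial ℂ) : lD (f - g) = lD f - lD g := by
  rw [sub_eq_add_neg, lD_add, lD_neg, sub_eq_add_neg]

end BGW9

open BGW9

/-- the operator identities `[a,b] = b`, `[c_N,a] = c_N`,
`[c_N,b] = 2a + 1` and `b∘c_N = a² − N²/4` on `ℂ[λ,λ⁻¹]`. -/
theorem kac_schwarz_algebra (ℏ N : ℂ) (hℏ : ℏ ≠ 0) :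
    (∀ f : LaurentPolynomial ℂ, aOp ℏ (bOp f) - bOp (aOp ℏ f) = bOp f) ∧
    (∀ f : LaurentPolynomial ℂ,
      cOp ℏ N (aOp ℏ f) - aOp ℏ (cOp ℏ N f) = cOp ℏ N f) ∧
    (∀ f : LaurentPolynomial ℂ,
      cOp ℏ N (bOp f) - bOp (cOp ℏ N f) = (2 : ℂ) • aOp ℏ f + f) ∧
    (∀ f : LaurentPolynomial ℂ,
      bOp (cOp ℏ N f) = aOp ℏ (aOp ℏ f) - (N^2/4) • f) := by
  refine ⟨fun f => ?_, fun f => ?_, fun f => ?_, fun f => ?_⟩ <;>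
  · simp only [aOp, bOp, cOp, lD_add, lD_sub, lD_smul, lD_T_mul, mul_add, mul_sub,
      smul_add, smul_sub, mul_smul_comm, smul_smul, ← mul_assoc, ← LaurentPolynomial.T_add]
    norm_num
    try module
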